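/- The equation (x - y)^4 + x^4 + (x + y)^4 = z^2 has no integer solutions x, y, z with gcd(x, y) = 1. -/

import Mathlib

lemma aux5 : ∀ a b c : ZMod 5, (a ≠ 0 ∨ b ≠ 0) → (a - b) ^ 4 + a ^ 4 + (a + b) ^ 4 ≠ c ^ 2 := by
  decide

theorem stmt_0 :
    ¬ ∃ x y z : ℤ, Int.gcd x y = 1 ∧ (x - y) ^ 4 + x ^ 4 + (x + y) ^ 4 = z ^ 2 := by
  rintro ⟨x, y, z, hg, h⟩
  have hcast := congrArg (Int.cast : ℤ → ZMod 5) h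
  push_cast at hcast
  have hne : (x : ZMod 5) ≠ 0 ∨ (y : ZMod 5) ≠ 0 := by
    by_contra hc
    push_neg at hc
    obtain ⟨hx, hy⟩ := hc
    rw [ZMod.intCast_zmod_eq_zero_iff_dvd] at hx hy
    have h5 : (5 : ℤ) ∣ Int.gcd x y := Int.dvd_coe_gcd hx hy
    rw [hg] at h5
    norm_num at h5
  exact aux5 _ _ _ hne hcast
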